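/- arXiv:2410.14420 — 4 statements merged into one kernel-verified Lean document; each statement's English description precedes it below -/
import Mathlib

section
/- Let H be a probability measure supported in [h₁, h₂] with 0 < h₁ ≤ h₂ < ∞, and X ∈ ℂ with Im(X) ≠ 0. Then Im(∫ τ^{-1}/(τX+1) dH(τ)) / Im(∫ 1/(τX+1) dH(τ)) = (∫ 1/|τX+1|² dH(τ)) / (∫ τ/|τX+1|² dH(τ)), and this ratio lies in [1/h₂, 1/h₁]. -/
open MeasureTheory

/-- The oracle precision shrinkage function t expressed via the boundary value X. -/
theorem stmt7 (h₁ h₂ : ℝ) (hh₁ : 0 < h₁) (h12 : h₁ ≤ h₂)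
    (H : Measure ℝ) [IsProbabilityMeasure H] (hsupp : H (Set.Icc h₁ h₂)ᶜ = 0)
    (X : ℂ) (hX : X.im ≠ 0) :
    (∫ τ : ℝ, ((τ : ℂ))⁻¹ / ((τ : ℂ) * X + 1) ∂H).im
        / (∫ τ : ℝ, 1 / ((τ : ℂ) * X + 1) ∂H).im
      = (∫ τ : ℝ, 1 / (‖(τ : ℂ) * X + 1‖) ^ 2 ∂H)
        / (∫ τ : ℝ, τ / (‖(τ : ℂ) * X + 1‖) ^ 2 ∂H) ∧
    (∫ τ : ℝ, 1 / (‖(τ : ℂ) * X + 1‖) ^ 2 ∂H)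
        / (∫ τ : ℝ, τ / (‖(τ : ℂ) * X + 1‖) ^ 2 ∂H)
      ∈ Set.Icc (1 / h₂) (1 / h₁) := by
  have hh₂ : 0 < h₂ := lt_of_lt_of_le hh₁ h12
  have hae : ∀ᵐ τ ∂H, τ ∈ Set.Icc h₁ h₂ := by
    exact MeasureTheory.ae_iff.mpr hsupp
  have himX : 0 < |X.im| := abs_pos.mpr hX
  -- lower bound on normSq
  have hden : ∀ τ : ℝ, τ ∈ Set.Icc h₁ h₂ →
      h₁ ^ 2 * X.im ^ 2 ≤ Complex.normSq ((τ : ℂ) * X + 1) := by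
    intro τ hτ
    have h1 : ((τ : ℂ) * X + 1).im = τ * X.im := by simp
    rw [Complex.normSq_apply, h1]
    nlinarith [sq_nonneg ((τ : ℂ) * X + 1).re, hτ.1, hh₁, sq_nonneg X.im,
      mul_le_mul hτ.1 hτ.1 hh₁.le (le_trans hh₁.le hτ.1)]
  have hc : (0:ℝ) < h₁ ^ 2 * X.im ^ 2 := by positivity
  have hdenpos : ∀ τ : ℝ, τ ∈ Set.Icc h₁ h₂ →
      0 < Complex.normSq ((τ : ℂ) * X + 1) := fun τ hτ => lt_of_lt_of_le hc (hden τ hτ)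
  -- upper bound on normSq
  have hdenub : ∀ τ : ℝ, τ ∈ Set.Icc h₁ h₂ →
      Complex.normSq ((τ : ℂ) * X + 1) ≤ (h₂ * ‖X‖ + 1) ^ 2 := by
    intro τ hτ
    rw [← Complex.sq_norm]
    have h1 : ‖(τ : ℂ) * X + 1‖ ≤ h₂ * ‖X‖ + 1 := by
      calc ‖(τ : ℂ) * X + 1‖ ≤ ‖(τ : ℂ) * X‖ + ‖(1 : ℂ)‖ :=
            norm_add_le _ _
        _ = |τ| * ‖X‖ + 1 := by simp
        _ ≤ h₂ * ‖X‖ + 1 := by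
            have : |τ| ≤ h₂ := abs_le.mpr ⟨le_trans (by linarith) hτ.1, hτ.2⟩
            nlinarith [norm_nonneg X]
    exact pow_le_pow_left₀ (norm_nonneg _) h1 2
  set f : ℝ → ℝ := fun τ => 1 / (‖(τ : ℂ) * X + 1‖) ^ 2 with hf
  set g : ℝ → ℝ := fun τ => τ / (‖(τ : ℂ) * X + 1‖) ^ 2 with hg
  have hfabs : ∀ τ : ℝ, f τ = 1 / Complex.normSq ((τ : ℂ) * X + 1) := by
    intro τ; simp [hf, Complex.sq_norm]
  have hgabs : ∀ τ : ℝ, g τ = τ / Complex.normSq ((τ : ℂ) * X + 1) := by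
    intro τ; simp [hg, Complex.sq_norm]
  have hmz : Measurable fun τ : ℝ => (τ : ℂ) * X + 1 :=
    (Complex.measurable_ofReal.mul_const X).add_const 1
  have hmf : Measurable f :=
    measurable_const.div ((continuous_norm.measurable.comp hmz).pow_const 2)
  have hmg : Measurable g :=
    measurable_id.div ((continuous_norm.measurable.comp hmz).pow_const 2)
  have hintf : Integrable f H := by
    refine (integrable_const ((h₁ ^ 2 * X.im ^ 2)⁻¹)).mono' hmf.aestronglyMeasurable ?_
    filter_upwards [hae] with τ hτ
    rw [hfabs τ, Real.norm_eq_abs, abs_of_nonneg (div_nonneg zero_le_one (Complex.normSq_nonneg _)), one_div]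
    exact inv_anti₀ hc (hden τ hτ)
  have hintg : Integrable g H := by
    refine (integrable_const (h₂ * (h₁ ^ 2 * X.im ^ 2)⁻¹)).mono' hmg.aestronglyMeasurable ?_
    filter_upwards [hae] with τ hτ
    rw [hgabs τ, Real.norm_eq_abs, abs_of_nonneg
      (div_nonneg (le_trans hh₁.le hτ.1) (Complex.normSq_nonneg _)), div_eq_mul_inv]
    exact mul_le_mul hτ.2 (inv_anti₀ hc (hden τ hτ)) (inv_nonneg.mpr (Complex.normSq_nonneg _)) hh₂.le
  set A := ∫ τ, f τ ∂H with hA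
  set B := ∫ τ, g τ ∂H with hB
  have hApos : 0 < A := by
    have hcpos : (0:ℝ) < ((h₂ * ‖X‖ + 1) ^ 2)⁻¹ := by positivity
    refine lt_of_lt_of_le hcpos ?_
    have := integral_mono_ae (integrable_const (((h₂ * ‖X‖ + 1) ^ 2)⁻¹)) hintf ?_
    · simpa using this
    · filter_upwards [hae] with τ hτ
      rw [hfabs τ, one_div]
      exact inv_anti₀ (hdenpos τ hτ) (hdenub τ hτ)
  have hBub : B ≤ h₂ * A := by
    rw [hB, hA, ← integral_const_mul]
    refine integral_mono_ae hintg (hintf.const_mul _) ?_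
    filter_upwards [hae] with τ hτ
    rw [hgabs τ, hfabs τ]
    rw [div_eq_mul_inv, mul_one_div, div_eq_mul_inv]
    exact mul_le_mul_of_nonneg_right hτ.2 (inv_nonneg.mpr (Complex.normSq_nonneg _))
  have hBlb : h₁ * A ≤ B := by
    rw [hB, hA, ← integral_const_mul]
    refine integral_mono_ae (hintf.const_mul _) hintg ?_
    filter_upwards [hae] with τ hτ
    rw [hgabs τ, hfabs τ, mul_one_div, div_eq_mul_inv, div_eq_mul_inv]
    exact mul_le_mul_of_nonneg_right hτ.1 (inv_nonneg.mpr (Complex.normSq_nonneg _))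
  have hBpos : 0 < B := lt_of_lt_of_le (by positivity) hBlb
  -- complex integrands
  set F : ℝ → ℂ := fun τ => ((τ : ℂ))⁻¹ / ((τ : ℂ) * X + 1) with hF
  set G : ℝ → ℂ := fun τ => 1 / ((τ : ℂ) * X + 1) with hG
  have hmF : Measurable F := (Complex.measurable_ofReal.inv).div hmz
  have hmG : Measurable G := measurable_const.div hmz
  have habslb : ∀ τ : ℝ, τ ∈ Set.Icc h₁ h₂ →
      h₁ * |X.im| ≤ ‖(τ : ℂ) * X + 1‖ := by
    intro τ hτ
    have h1 : ((τ : ℂ) * X + 1).im = τ * X.im := by simp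
    calc h₁ * |X.im| ≤ τ * |X.im| := by
          exact mul_le_mul_of_nonneg_right hτ.1 (abs_nonneg _)
      _ = |τ * X.im| := by rw [abs_mul, abs_of_nonneg (le_trans hh₁.le hτ.1)]
      _ = |((τ : ℂ) * X + 1).im| := by rw [h1]
      _ ≤ ‖(τ : ℂ) * X + 1‖ := Complex.abs_im_le_norm _
  have hintG : Integrable G H := by
    refine (integrable_const ((h₁ * |X.im|)⁻¹)).mono' hmG.aestronglyMeasurable ?_
    filter_upwards [hae] with τ hτ
    rw [hG]
    simp only [one_div, norm_inv]
    exact inv_anti₀ (by positivity) (habslb τ hτ)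
  have hintF : Integrable F H := by
    refine (integrable_const (h₁⁻¹ * (h₁ * |X.im|)⁻¹)).mono' hmF.aestronglyMeasurable ?_
    filter_upwards [hae] with τ hτ
    have hτpos : 0 < τ := lt_of_lt_of_le hh₁ hτ.1
    rw [hF]
    simp only [div_eq_mul_inv, norm_mul, norm_inv, map_mul, map_inv₀,
      Complex.norm_real, Real.norm_eq_abs, abs_of_pos hτpos]
    exact mul_le_mul (inv_anti₀ hh₁ hτ.1)
      (inv_anti₀ (by positivity) (habslb τ hτ))
      (inv_nonneg.mpr (norm_nonneg _)) (by positivity)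
  -- imaginary parts
  have hGim : (∫ τ, G τ ∂H).im = -X.im * B := by
    have h := Complex.imCLM.integral_comp_comm hintG
    simp only [Complex.imCLM_apply] at h
    rw [← h, hB, ← integral_const_mul]
    refine integral_congr_ae ?_
    filter_upwards [hae] with τ hτ
    have hns := (hdenpos τ hτ).ne'
    simp only [hG, one_div, Complex.inv_im, hgabs τ]
    have h1 : ((τ : ℂ) * X + 1).im = τ * X.im := by simp
    rw [h1]
    field_simp
  have hFim : (∫ τ, F τ ∂H).im = -X.im * A := by
    have h := Complex.imCLM.integral_comp_comm hintF
    simp only [Complex.imCLM_apply] at h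
    rw [← h, hA, ← integral_const_mul]
    refine integral_congr_ae ?_
    filter_upwards [hae] with τ hτ
    have hτpos : 0 < τ := lt_of_lt_of_le hh₁ hτ.1
    have hns := (hdenpos τ hτ).ne'
    have h1 : ((τ : ℂ) * X + 1).im = τ * X.im := by simp
    have h2 : ((τ : ℂ))⁻¹ = ((τ⁻¹ : ℝ) : ℂ) := by push_cast; ring
    simp only [hF, div_eq_mul_inv, h2, Complex.mul_im,
      Complex.ofReal_re, Complex.ofReal_im, Complex.inv_im, Complex.inv_re, h1, hfabs τ]
    field_simp
    ring
  constructor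
  · rw [hFim, hGim, mul_div_mul_left A B (neg_ne_zero.mpr hX), hA, hB]
  · constructor
    · rw [div_le_div_iff₀ hh₂ hBpos]
      linarith
    · rw [div_le_div_iff₀ hBpos hh₁]
      linarith
end

section
/- Let H be a probability measure supported in [h₁, h₂], 0 < h₁ ≤ h₂ < ∞, c > 0, and D a probability measure supported in [d₁, d₂], 0 < d₁ ≤ d₂ < ∞. Fix z ∈ ℂ with Im(z) > 0. Then the equation X = -∫ δ / (z - δ c ∫ τ/(τX + 1) dH(τ)) dD(δ) has at most one solution X with Im(X) > 0. -/
open MeasureTheory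


lemma imd (X : ℂ) (τ : ℝ) : ((τ:ℂ)*X+1).im = τ * X.im := by
  simp [Complex.add_im, Complex.mul_im]

lemma nsq_ge (X : ℂ) (τ : ℝ) : (τ * X.im)^2 ≤ Complex.normSq ((τ:ℂ)*X+1) := by
  have h := imd X τ
  rw [Complex.normSq_apply, ← h]
  nlinarith [sq_nonneg (((τ:ℂ)*X+1).re), sq_nonneg (((τ:ℂ)*X+1).im)]

lemma den1_ne {X : ℂ} (hX : 0 < X.im) (τ : ℝ) : (τ:ℂ)*X+1 ≠ 0 := by
  rcases eq_or_ne τ 0 with rfl | hτ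
  · simp
  · intro h
    have := congrArg Complex.im h
    rw [imd] at this
    simp only [Complex.zero_im] at this
    exact (mul_ne_zero hτ hX.ne') this

lemma nsq_pos {X : ℂ} (hX : 0 < X.im) (τ : ℝ) : 0 < Complex.normSq ((τ:ℂ)*X+1) :=
  Complex.normSq_pos.mpr (den1_ne hX τ)

lemma ratio_bound {X : ℂ} (hX : 0 < X.im) (τ : ℝ) :
    τ^2 / Complex.normSq ((τ:ℂ)*X+1) ≤ (X.im)⁻¹^2 := by
  rw [div_le_iff₀ (nsq_pos hX τ)]
  have h := nsq_ge X τ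
  have h2 : (X.im)⁻¹^2 * (τ*X.im)^2 = τ^2 := by
    field_simp
  nlinarith [mul_le_mul_of_nonneg_left h (sq_nonneg (X.im)⁻¹)]

lemma norm_den1_ge (X : ℂ) (τ : ℝ) : τ * X.im ≤ ‖(τ:ℂ)*X+1‖ := by
  have h := Complex.abs_im_le_norm ((τ:ℂ)*X+1)
  rw [imd] at h
  calc τ * X.im ≤ |τ * X.im| := le_abs_self _
    _ ≤ ‖(τ:ℂ)*X+1‖ := h

lemma cintegral_im {α : Type*} {mα : MeasurableSpace α} {μ : Measure α} {f : α → ℂ}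
    (hf : Integrable f μ) : (∫ x, f x ∂μ).im = ∫ x, (f x).im ∂μ := by
  rw [← RCLike.im_eq_complex_im, ← integral_im hf]

lemma solution_facts (h₁ h₂ d₁ d₂ : ℝ) (hh₁ : 0 < h₁) (h12 : h₁ ≤ h₂)
    (hd₁ : 0 < d₁) (hd12 : d₁ ≤ d₂) (c : ℝ) (hc : 0 < c)
    (H : Measure ℝ) [IsProbabilityMeasure H] (hHsupp : H (Set.Icc h₁ h₂)ᶜ = 0)
    (D : Measure ℝ) [IsProbabilityMeasure D] (hDsupp : D (Set.Icc d₁ d₂)ᶜ = 0)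
    (z : ℂ) (hz : 0 < z.im) (X : ℂ) (hX : 0 < X.im)
    (hfix : X = -∫ δ : ℝ, (δ:ℂ) /
        (z - (δ:ℂ) * (c:ℂ) * ∫ τ : ℝ, (τ:ℂ) / ((τ:ℂ) * X + 1) ∂H) ∂D) :
    Integrable (fun τ : ℝ => (τ:ℂ)/((τ:ℂ)*X+1)) H ∧
    Integrable (fun δ : ℝ => (δ:ℂ)/(z - (δ:ℂ)*(c:ℂ)* ∫ τ : ℝ, (τ:ℂ)/((τ:ℂ)*X+1) ∂H)) D ∧
    (∀ᵐ (δ : ℝ) ∂D, z.im ≤ ‖z - (δ:ℂ)*(c:ℂ)* ∫ τ : ℝ, (τ:ℂ)/((τ:ℂ)*X+1) ∂H‖) ∧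
    0 ≤ (∫ δ : ℝ, δ^2 / Complex.normSq (z - (δ:ℂ)*(c:ℂ)* ∫ τ : ℝ, (τ:ℂ)/((τ:ℂ)*X+1) ∂H) ∂D) ∧
    0 ≤ (∫ τ : ℝ, τ^2 / Complex.normSq ((τ:ℂ)*X+1) ∂H) ∧
    c * ((∫ δ : ℝ, δ^2 / Complex.normSq (z - (δ:ℂ)*(c:ℂ)* ∫ τ : ℝ, (τ:ℂ)/((τ:ℂ)*X+1) ∂H) ∂D) *
        (∫ τ : ℝ, τ^2 / Complex.normSq ((τ:ℂ)*X+1) ∂H)) < 1 := by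
  have haeH : ∀ᵐ τ ∂H, τ ∈ Set.Icc h₁ h₂ := by
    rw [ae_iff]
    exact hHsupp
  have haeD : ∀ᵐ δ ∂D, δ ∈ Set.Icc d₁ d₂ := by
    rw [ae_iff]
    exact hDsupp
  set m : ℂ := ∫ τ : ℝ, (τ:ℂ)/((τ:ℂ)*X+1) ∂H with hm
  -- measurability and integrability over H
  have hcontden : Continuous (fun τ : ℝ => (τ:ℂ)*X+1) :=
    (Complex.continuous_ofReal.mul continuous_const).add continuous_const
  have hmeas1 : AEStronglyMeasurable (fun τ : ℝ => (τ:ℂ)/((τ:ℂ)*X+1)) H :=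
    (Continuous.div Complex.continuous_ofReal hcontden (fun τ => den1_ne hX τ)).aestronglyMeasurable
  have hbound1 : ∀ᵐ (τ : ℝ) ∂H, ‖(τ:ℂ)/((τ:ℂ)*X+1)‖ ≤ h₂ * (h₁ * X.im)⁻¹ := by
    filter_upwards [haeH] with τ hτ
    rw [norm_div, Complex.norm_real]
    have h2 : h₁ * X.im ≤ ‖(τ:ℂ)*X+1‖ :=
      le_trans (by nlinarith [hτ.1]) (norm_den1_ge X τ)
    have h3 : (0:ℝ) < h₁ * X.im := by positivity
    rw [Real.norm_eq_abs, abs_of_nonneg (le_trans hh₁.le hτ.1), ← div_eq_mul_inv]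
    exact div_le_div₀ (by linarith) (le_trans hτ.2 le_rfl) h3 h2
  have hint1 : Integrable (fun τ : ℝ => (τ:ℂ)/((τ:ℂ)*X+1)) H :=
    Integrable.mono' (integrable_const _) hmeas1 hbound1
  have hintB : Integrable (fun τ : ℝ => τ^2 / Complex.normSq ((τ:ℂ)*X+1)) H := by
    refine Integrable.mono' (integrable_const ((X.im)⁻¹^2))
      ((Continuous.div (continuous_pow 2) (Complex.continuous_normSq.comp hcontden)
        (fun τ => (nsq_pos hX τ).ne')).aestronglyMeasurable) (ae_of_all _ fun τ => ?_)
    rw [Real.norm_eq_abs, abs_of_nonneg (div_nonneg (sq_nonneg τ) (Complex.normSq_nonneg _))]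
    exact ratio_bound hX τ
  set B : ℝ := ∫ τ : ℝ, τ^2 / Complex.normSq ((τ:ℂ)*X+1) ∂H with hB
  have hBnn : 0 ≤ B :=
    integral_nonneg fun τ => div_nonneg (sq_nonneg τ) (Complex.normSq_nonneg _)
  have hmim : m.im = -X.im * B := by
    rw [hm, cintegral_im hint1, hB, ← integral_const_mul]
    refine integral_congr_ae (ae_of_all _ fun τ => ?_)
    show ((τ:ℂ)/((τ:ℂ)*X+1)).im = -X.im * (τ^2 / Complex.normSq ((τ:ℂ)*X+1))
    rw [Complex.div_im, imd]
    simp only [Complex.ofReal_re, Complex.ofReal_im]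
    ring
  have hmim0 : m.im ≤ 0 := by
    rw [hmim]; nlinarith
  have hmnorm : ‖m‖ ≤ h₂ * (h₁ * X.im)⁻¹ := by
    calc ‖m‖ ≤ ∫ _ : ℝ, h₂ * (h₁ * X.im)⁻¹ ∂H :=
          norm_integral_le_of_norm_le (integrable_const _) hbound1
      _ = h₂ * (h₁ * X.im)⁻¹ := by simp
  set CZ : ℝ := ‖z‖ + d₂ * c * (h₂ * (h₁ * X.im)⁻¹) with hCZ
  have hCZpos : 0 < CZ := by
    have h1 : z.im ≤ ‖z‖ := le_trans (le_abs_self _) (Complex.abs_im_le_norm z)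
    have hd₂ : (0:ℝ) < d₂ := hd₁.trans_le hd12
    have hh₂ : (0:ℝ) < h₂ := hh₁.trans_le h12
    have : (0:ℝ) ≤ d₂ * c * (h₂ * (h₁ * X.im)⁻¹) := by positivity
    rw [hCZ]; linarith
  have him2 : ∀ δ : ℝ, (z - (δ:ℂ)*(c:ℂ)*m).im = z.im - δ*c*m.im := by
    intro δ
    simp [Complex.sub_im, Complex.mul_im]
  -- ae facts on D
  have haelow : ∀ᵐ (δ : ℝ) ∂D, z.im ≤ ‖z - (δ:ℂ)*(c:ℂ)*m‖ := by
    filter_upwards [haeD] with δ hδ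
    have h1 : z.im ≤ (z - (δ:ℂ)*(c:ℂ)*m).im := by
      rw [him2 δ]
      have : δ * c * m.im ≤ 0 :=
        mul_nonpos_of_nonneg_of_nonpos (mul_nonneg (le_trans hd₁.le hδ.1) hc.le) hmim0
      linarith
    calc z.im ≤ (z - (δ:ℂ)*(c:ℂ)*m).im := h1
      _ ≤ |(z - (δ:ℂ)*(c:ℂ)*m).im| := le_abs_self _
      _ ≤ ‖z - (δ:ℂ)*(c:ℂ)*m‖ := Complex.abs_im_le_norm _
  have haehigh : ∀ᵐ (δ : ℝ) ∂D, ‖z - (δ:ℂ)*(c:ℂ)*m‖ ≤ CZ := by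
    filter_upwards [haeD] with δ hδ
    calc ‖z - (δ:ℂ)*(c:ℂ)*m‖ ≤ ‖z‖ + ‖(δ:ℂ)*(c:ℂ)*m‖ := norm_sub_le _ _
      _ = ‖z‖ + |δ| * c * ‖m‖ := by
          rw [norm_mul, norm_mul, Complex.norm_real, Complex.norm_real,
            Real.norm_eq_abs, Real.norm_eq_abs, abs_of_pos hc]
      _ ≤ CZ := by
          rw [hCZ]
          have hδ2 : |δ| ≤ d₂ := by
            rw [abs_of_nonneg (le_trans hd₁.le hδ.1)]; exact hδ.2
          have h5 : |δ| * ‖m‖ ≤ d₂ * (h₂ * (h₁ * X.im)⁻¹) :=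
            mul_le_mul hδ2 hmnorm (norm_nonneg m) (le_trans (abs_nonneg δ) hδ2)
          nlinarith [h5, hc.le]
  -- integrands over D
  have hcontden2 : Continuous (fun δ : ℝ => z - (δ:ℂ)*(c:ℂ)*m) :=
    continuous_const.sub ((Complex.continuous_ofReal.mul continuous_const).mul continuous_const)
  have hmeas2 : AEStronglyMeasurable (fun δ : ℝ => (δ:ℂ)/(z - (δ:ℂ)*(c:ℂ)*m)) D :=
    (Complex.measurable_ofReal.div hcontden2.measurable).aestronglyMeasurable
  have hd₂ : (0:ℝ) < d₂ := hd₁.trans_le hd12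
  have hbound2 : ∀ᵐ (δ:ℝ) ∂D, ‖(δ:ℂ)/(z - (δ:ℂ)*(c:ℂ)*m)‖ ≤ d₂ * (z.im)⁻¹ := by
    filter_upwards [haeD, haelow] with δ hδ hlow
    rw [norm_div, Complex.norm_real, Real.norm_eq_abs,
      abs_of_nonneg (le_trans hd₁.le hδ.1), ← div_eq_mul_inv]
    exact div_le_div₀ hd₂.le hδ.2 hz hlow
  have hint2 : Integrable (fun δ : ℝ => (δ:ℂ)/(z - (δ:ℂ)*(c:ℂ)*m)) D :=
    Integrable.mono' (integrable_const _) hmeas2 hbound2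
  have haensq : ∀ᵐ (δ:ℝ) ∂D, z.im^2 ≤ Complex.normSq (z - (δ:ℂ)*(c:ℂ)*m) ∧
      Complex.normSq (z - (δ:ℂ)*(c:ℂ)*m) ≤ CZ^2 := by
    filter_upwards [haelow, haehigh] with δ hl hh
    have e : Complex.normSq (z - (δ:ℂ)*(c:ℂ)*m) = ‖z - (δ:ℂ)*(c:ℂ)*m‖^2 := by
      rw [Complex.normSq_eq_norm_sq]
    rw [e]
    exact ⟨pow_le_pow_left₀ hz.le hl 2, pow_le_pow_left₀ (norm_nonneg _) hh 2⟩
  have hmeasA : AEStronglyMeasurable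
      (fun δ : ℝ => δ^2 / Complex.normSq (z - (δ:ℂ)*(c:ℂ)*m)) D :=
    ((measurable_id.pow_const 2).div
      ((Complex.continuous_normSq.comp hcontden2).measurable)).aestronglyMeasurable
  have hmeasE : AEStronglyMeasurable
      (fun δ : ℝ => δ / Complex.normSq (z - (δ:ℂ)*(c:ℂ)*m)) D :=
    (measurable_id.div
      ((Complex.continuous_normSq.comp hcontden2).measurable)).aestronglyMeasurable
  have hintA : Integrable (fun δ : ℝ => δ^2 / Complex.normSq (z - (δ:ℂ)*(c:ℂ)*m)) D := by
    refine Integrable.mono' (integrable_const (d₂^2 * (z.im^2)⁻¹)) hmeasA ?_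
    filter_upwards [haeD, haensq] with δ hδ hn
    rw [Real.norm_eq_abs, abs_of_nonneg (div_nonneg (sq_nonneg _) (Complex.normSq_nonneg _)),
      ← div_eq_mul_inv]
    refine div_le_div₀ (by positivity) ?_ (by positivity) hn.1
    nlinarith [hδ.1, hδ.2, hd₁]
  have hintE : Integrable (fun δ : ℝ => δ / Complex.normSq (z - (δ:ℂ)*(c:ℂ)*m)) D := by
    refine Integrable.mono' (integrable_const (d₂ * (z.im^2)⁻¹)) hmeasE ?_
    filter_upwards [haeD, haensq] with δ hδ hn
    rw [Real.norm_eq_abs,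
      abs_of_nonneg (div_nonneg (le_trans hd₁.le hδ.1) (Complex.normSq_nonneg _)),
      ← div_eq_mul_inv]
    exact div_le_div₀ hd₂.le hδ.2 (by positivity) hn.1
  set A : ℝ := ∫ δ : ℝ, δ^2 / Complex.normSq (z - (δ:ℂ)*(c:ℂ)*m) ∂D with hA
  set E : ℝ := ∫ δ : ℝ, δ / Complex.normSq (z - (δ:ℂ)*(c:ℂ)*m) ∂D with hE
  have hAnn : 0 ≤ A :=
    integral_nonneg fun δ => div_nonneg (sq_nonneg _) (Complex.normSq_nonneg _)
  have hElow : d₁ * (CZ^2)⁻¹ ≤ E := by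
    rw [hE]
    have h0 : d₁ * (CZ^2)⁻¹ = ∫ _ : ℝ, d₁ * (CZ^2)⁻¹ ∂D := by simp
    rw [h0]
    refine integral_mono_ae (integrable_const _) hintE ?_
    filter_upwards [haeD, haensq] with δ hδ hn
    rw [← div_eq_mul_inv]
    exact div_le_div₀ (le_trans hd₁.le hδ.1) hδ.1
      (lt_of_lt_of_le (by positivity) hn.1) hn.2
  have hEpos : 0 < E := lt_of_lt_of_le (by positivity) hElow
  have key : ∀ δ : ℝ, -(((δ:ℂ)/(z - (δ:ℂ)*(c:ℂ)*m)).im)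
      = z.im * (δ / Complex.normSq (z - (δ:ℂ)*(c:ℂ)*m))
        - (c*m.im) * (δ^2 / Complex.normSq (z - (δ:ℂ)*(c:ℂ)*m)) := by
    intro δ
    rw [Complex.div_im, him2 δ]
    simp only [Complex.ofReal_re, Complex.ofReal_im]
    ring
  have hXim : X.im = z.im * E - c * m.im * A := by
    have h0 : X.im = ∫ δ : ℝ, -(((δ:ℂ)/(z - (δ:ℂ)*(c:ℂ)*m)).im) ∂D := by
      conv_lhs => rw [hfix]
      rw [Complex.neg_im, cintegral_im hint2, ← integral_neg]
    rw [h0]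
    calc ∫ δ : ℝ, -(((δ:ℂ)/(z - (δ:ℂ)*(c:ℂ)*m)).im) ∂D
        = ∫ δ : ℝ, (z.im * (δ / Complex.normSq (z - (δ:ℂ)*(c:ℂ)*m))
            - (c*m.im) * (δ^2 / Complex.normSq (z - (δ:ℂ)*(c:ℂ)*m))) ∂D :=
          integral_congr_ae (ae_of_all _ key)
      _ = z.im * E - c * m.im * A := by
          rw [integral_sub (hintE.const_mul _) (hintA.const_mul _),
            integral_const_mul, integral_const_mul, hA, hE]
  refine ⟨hint1, hint2, haelow, hAnn, hBnn, ?_⟩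
  rw [hmim] at hXim
  have hfin : X.im * (1 - c * (A * B)) = z.im * E := by linear_combination hXim
  nlinarith [mul_pos hz hEpos, hX, hfin]

lemma my_cs {μ : Measure ℝ} [IsFiniteMeasure μ] {f g : ℝ → ℝ}
    (hfm : AEStronglyMeasurable f μ) (hgm : AEStronglyMeasurable g μ)
    (hf0 : 0 ≤ᵐ[μ] f) (hg0 : 0 ≤ᵐ[μ] g) {Cf Cg : ℝ}
    (hfb : ∀ᵐ x ∂μ, ‖f x‖ ≤ Cf) (hgb : ∀ᵐ x ∂μ, ‖g x‖ ≤ Cg) :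
    ∫ x, f x * g x ∂μ ≤ Real.sqrt (∫ x, f x ^ 2 ∂μ) * Real.sqrt (∫ x, g x ^ 2 ∂μ) := by
  have hpq : Real.HolderConjugate 2 2 := ⟨by norm_num, by norm_num, by norm_num⟩
  have hf : MemLp f (ENNReal.ofReal 2) μ := MemLp.of_bound hfm Cf hfb
  have hg : MemLp g (ENNReal.ofReal 2) μ := MemLp.of_bound hgm Cg hgb
  have := integral_mul_le_Lp_mul_Lq_of_nonneg hpq hf0 hg0 hf hg
  have e1 : ∫ a, f a ^ (2:ℝ) ∂μ = ∫ a, f a ^ 2 ∂μ := by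
    refine integral_congr_ae ?_
    filter_upwards with x
    rw [show ((2:ℝ) = ((2:ℕ):ℝ)) by norm_num, Real.rpow_natCast]
  have e2 : ∫ a, g a ^ (2:ℝ) ∂μ = ∫ a, g a ^ 2 ∂μ := by
    refine integral_congr_ae ?_
    filter_upwards with x
    rw [show ((2:ℝ) = ((2:ℕ):ℝ)) by norm_num, Real.rpow_natCast]
  rw [e1, e2] at this
  calc ∫ x, f x * g x ∂μ ≤ (∫ a, f a ^ 2 ∂μ) ^ (1/(2:ℝ)) * (∫ a, g a ^ 2 ∂μ) ^ (1/(2:ℝ)) := this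
    _ = _ := by rw [Real.sqrt_eq_rpow, Real.sqrt_eq_rpow]

lemma f_bound {X : ℂ} (hX : 0 < X.im) (τ : ℝ) : |τ| / ‖(τ:ℂ)*X+1‖ ≤ (X.im)⁻¹ := by
  have h1 : |τ| * X.im ≤ ‖(τ:ℂ)*X+1‖ := by
    have h := Complex.abs_im_le_norm ((τ:ℂ)*X+1)
    rw [imd, abs_mul, abs_of_pos hX] at h
    exact h
  have h2 : (0:ℝ) < ‖(τ:ℂ)*X+1‖ := norm_pos_iff.mpr (den1_ne hX τ)
  rw [div_le_iff₀ h2]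
  have h3 : X.im⁻¹ * (|τ| * X.im) = |τ| := by field_simp
  nlinarith [mul_le_mul_of_nonneg_left h1 (inv_nonneg.mpr hX.le)]

set_option maxHeartbeats 1600000 in
/-- Uniqueness in ℂ₊ of the solution of the fundamental equation. -/
theorem stmt8 (h₁ h₂ d₁ d₂ : ℝ) (hh₁ : 0 < h₁) (h12 : h₁ ≤ h₂)
    (hd₁ : 0 < d₁) (hd12 : d₁ ≤ d₂) (c : ℝ) (hc : 0 < c)
    (H : Measure ℝ) [IsProbabilityMeasure H] (hHsupp : H (Set.Icc h₁ h₂)ᶜ = 0)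
    (D : Measure ℝ) [IsProbabilityMeasure D] (hDsupp : D (Set.Icc d₁ d₂)ᶜ = 0)
    (z : ℂ) (hz : 0 < z.im) :
    ∀ X₁ X₂ : ℂ, 0 < X₁.im → 0 < X₂.im →
      X₁ = -∫ δ : ℝ, (δ : ℂ) /
          (z - (δ : ℂ) * (c : ℂ) * ∫ τ : ℝ, (τ : ℂ) / ((τ : ℂ) * X₁ + 1) ∂H) ∂D →
      X₂ = -∫ δ : ℝ, (δ : ℂ) /
          (z - (δ : ℂ) * (c : ℂ) * ∫ τ : ℝ, (τ : ℂ) / ((τ : ℂ) * X₂ + 1) ∂H) ∂D →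
      X₁ = X₂ := by
  intro X₁ X₂ hX₁ hX₂ e₁ e₂
  have haeD : ∀ᵐ δ ∂D, δ ∈ Set.Icc d₁ d₂ := by
    rw [ae_iff]; exact hDsupp
  have hd₂ : (0:ℝ) < d₂ := hd₁.trans_le hd12
  set m₁ : ℂ := ∫ τ : ℝ, (τ:ℂ)/((τ:ℂ)*X₁+1) ∂H with hm₁
  set m₂ : ℂ := ∫ τ : ℝ, (τ:ℂ)/((τ:ℂ)*X₂+1) ∂H with hm₂
  obtain ⟨hint1₁, hint2₁, haelow₁, hA₁nn, hB₁nn, hK₁⟩ :=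
    solution_facts h₁ h₂ d₁ d₂ hh₁ h12 hd₁ hd12 c hc H hHsupp D hDsupp z hz X₁ hX₁ e₁
  obtain ⟨hint1₂, hint2₂, haelow₂, hA₂nn, hB₂nn, hK₂⟩ :=
    solution_facts h₁ h₂ d₁ d₂ hh₁ h12 hd₁ hd12 c hc H hHsupp D hDsupp z hz X₂ hX₂ e₂
  set B₁ : ℝ := ∫ τ : ℝ, τ^2 / Complex.normSq ((τ:ℂ)*X₁+1) ∂H with hB₁
  set B₂ : ℝ := ∫ τ : ℝ, τ^2 / Complex.normSq ((τ:ℂ)*X₂+1) ∂H with hB₂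
  set A₁ : ℝ := ∫ δ : ℝ, δ^2 / Complex.normSq (z - (δ:ℂ)*(c:ℂ)*m₁) ∂D with hA₁
  set A₂ : ℝ := ∫ δ : ℝ, δ^2 / Complex.normSq (z - (δ:ℂ)*(c:ℂ)*m₂) ∂D with hA₂
  set Q : ℂ := ∫ τ : ℝ, (τ:ℂ)^2/(((τ:ℂ)*X₁+1)*((τ:ℂ)*X₂+1)) ∂H with hQ
  set P : ℂ := ∫ δ : ℝ, (δ:ℂ)^2/((z - (δ:ℂ)*(c:ℂ)*m₁)*(z - (δ:ℂ)*(c:ℂ)*m₂)) ∂D with hP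
  -- difference of the m's
  have hmQ : m₁ - m₂ = -(X₁ - X₂) * Q := by
    rw [hQ, ← integral_const_mul, hm₁, hm₂, ← integral_sub hint1₁ hint1₂]
    refine integral_congr_ae (ae_of_all _ fun τ => ?_)
    have u1 := den1_ne hX₁ τ
    have u2 := den1_ne hX₂ τ
    field_simp
    ring
  -- difference of the fixed point equations
  have hPdiff : X₁ - X₂ = -((c:ℂ) * (m₁ - m₂) * P) := by
    have h0 : X₁ - X₂ =
        -∫ δ : ℝ, ((δ:ℂ)/(z - (δ:ℂ)*(c:ℂ)*m₁) - (δ:ℂ)/(z - (δ:ℂ)*(c:ℂ)*m₂)) ∂D := by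
      rw [integral_sub hint2₁ hint2₂]
      conv_lhs => rw [e₁, e₂]
      ring
    rw [h0, hP, ← integral_const_mul, neg_inj]
    refine integral_congr_ae ?_
    filter_upwards [haelow₁, haelow₂] with δ hl1 hl2
    have u1 : z - (δ:ℂ)*(c:ℂ)*m₁ ≠ 0 := by
      intro h; rw [h, norm_zero] at hl1; linarith
    have u2 : z - (δ:ℂ)*(c:ℂ)*m₂ ≠ 0 := by
      intro h; rw [h, norm_zero] at hl2; linarith
    field_simp
    ring
  have hDelta : X₁ - X₂ = (X₁ - X₂) * ((c:ℂ) * Q * P) := by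
    calc X₁ - X₂ = -((c:ℂ) * (m₁ - m₂) * P) := hPdiff
      _ = -((c:ℂ) * (-(X₁ - X₂) * Q) * P) := by rw [← hmQ]
      _ = (X₁ - X₂) * ((c:ℂ) * Q * P) := by ring
  -- Cauchy-Schwarz bound for Q
  have hQbound : ‖Q‖ ≤ Real.sqrt B₁ * Real.sqrt B₂ := by
    have hstep1 : ‖Q‖ ≤ ∫ τ : ℝ, (|τ| / ‖(τ:ℂ)*X₁+1‖) * (|τ| / ‖(τ:ℂ)*X₂+1‖) ∂H := by
      refine le_trans (norm_integral_le_integral_norm _) (le_of_eq ?_)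
      refine integral_congr_ae (ae_of_all _ fun τ => ?_)
      show ‖(τ:ℂ)^2/(((τ:ℂ)*X₁+1)*((τ:ℂ)*X₂+1))‖ = _
      rw [norm_div, norm_mul, norm_pow, Complex.norm_real, Real.norm_eq_abs]
      ring
    have hcs : ∫ τ : ℝ, (|τ| / ‖(τ:ℂ)*X₁+1‖) * (|τ| / ‖(τ:ℂ)*X₂+1‖) ∂H ≤
        Real.sqrt (∫ τ : ℝ, (|τ| / ‖(τ:ℂ)*X₁+1‖)^2 ∂H) *
        Real.sqrt (∫ τ : ℝ, (|τ| / ‖(τ:ℂ)*X₂+1‖)^2 ∂H) := by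
      have hc1 : Continuous (fun τ : ℝ => |τ| / ‖(τ:ℂ)*X₁+1‖) :=
        Continuous.div (continuous_abs)
          (((Complex.continuous_ofReal.mul continuous_const).add continuous_const).norm)
          (fun τ => (norm_pos_iff.mpr (den1_ne hX₁ τ)).ne')
      have hc2 : Continuous (fun τ : ℝ => |τ| / ‖(τ:ℂ)*X₂+1‖) :=
        Continuous.div (continuous_abs)
          (((Complex.continuous_ofReal.mul continuous_const).add continuous_const).norm)
          (fun τ => (norm_pos_iff.mpr (den1_ne hX₂ τ)).ne')
      refine my_cs hc1.aestronglyMeasurable hc2.aestronglyMeasurable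
        (ae_of_all _ fun τ => by positivity) (ae_of_all _ fun τ => by positivity)
        (Cf := (X₁.im)⁻¹) (Cg := (X₂.im)⁻¹) (ae_of_all _ fun τ => ?_) (ae_of_all _ fun τ => ?_)
      · rw [Real.norm_eq_abs, abs_of_nonneg (by positivity)]; exact f_bound hX₁ τ
      · rw [Real.norm_eq_abs, abs_of_nonneg (by positivity)]; exact f_bound hX₂ τ
    have hs1 : ∫ τ : ℝ, (|τ| / ‖(τ:ℂ)*X₁+1‖)^2 ∂H = B₁ := by
      rw [hB₁]
      refine integral_congr_ae (ae_of_all _ fun τ => ?_)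
      show (|τ| / ‖(τ:ℂ)*X₁+1‖)^2 = τ^2 / Complex.normSq ((τ:ℂ)*X₁+1)
      rw [div_pow, sq_abs, ← Complex.sq_norm]
    have hs2 : ∫ τ : ℝ, (|τ| / ‖(τ:ℂ)*X₂+1‖)^2 ∂H = B₂ := by
      rw [hB₂]
      refine integral_congr_ae (ae_of_all _ fun τ => ?_)
      show (|τ| / ‖(τ:ℂ)*X₂+1‖)^2 = τ^2 / Complex.normSq ((τ:ℂ)*X₂+1)
      rw [div_pow, sq_abs, ← Complex.sq_norm]
    rw [hs1, hs2] at hcs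
    exact le_trans hstep1 hcs
  -- Cauchy-Schwarz bound for P
  have hPbound : ‖P‖ ≤ Real.sqrt A₁ * Real.sqrt A₂ := by
    have hstep1 : ‖P‖ ≤ ∫ δ : ℝ,
        (|δ| / ‖z - (δ:ℂ)*(c:ℂ)*m₁‖) * (|δ| / ‖z - (δ:ℂ)*(c:ℂ)*m₂‖) ∂D := by
      refine le_trans (norm_integral_le_integral_norm _) (le_of_eq ?_)
      refine integral_congr_ae (ae_of_all _ fun δ => ?_)
      show ‖(δ:ℂ)^2/((z - (δ:ℂ)*(c:ℂ)*m₁)*(z - (δ:ℂ)*(c:ℂ)*m₂))‖ = _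
      rw [norm_div, norm_mul, norm_pow, Complex.norm_real, Real.norm_eq_abs]
      ring
    have hcs : ∫ δ : ℝ, (|δ| / ‖z - (δ:ℂ)*(c:ℂ)*m₁‖) * (|δ| / ‖z - (δ:ℂ)*(c:ℂ)*m₂‖) ∂D ≤
        Real.sqrt (∫ δ : ℝ, (|δ| / ‖z - (δ:ℂ)*(c:ℂ)*m₁‖)^2 ∂D) *
        Real.sqrt (∫ δ : ℝ, (|δ| / ‖z - (δ:ℂ)*(c:ℂ)*m₂‖)^2 ∂D) := by
      have hm1 : AEStronglyMeasurable (fun δ : ℝ => |δ| / ‖z - (δ:ℂ)*(c:ℂ)*m₁‖) D :=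
        (measurable_abs.div
          ((continuous_const.sub ((Complex.continuous_ofReal.mul continuous_const).mul
            continuous_const)).norm.measurable)).aestronglyMeasurable
      have hm2 : AEStronglyMeasurable (fun δ : ℝ => |δ| / ‖z - (δ:ℂ)*(c:ℂ)*m₂‖) D :=
        (measurable_abs.div
          ((continuous_const.sub ((Complex.continuous_ofReal.mul continuous_const).mul
            continuous_const)).norm.measurable)).aestronglyMeasurable
      refine my_cs hm1 hm2
        (ae_of_all _ fun δ => by positivity) (ae_of_all _ fun δ => by positivity)
        (Cf := d₂ * (z.im)⁻¹) (Cg := d₂ * (z.im)⁻¹) ?_ ?_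
      · filter_upwards [haeD, haelow₁] with δ hδ hl
        rw [Real.norm_eq_abs, abs_of_nonneg (by positivity), ← div_eq_mul_inv]
        refine div_le_div₀ hd₂.le ?_ hz hl
        rw [abs_of_nonneg (le_trans hd₁.le hδ.1)]; exact hδ.2
      · filter_upwards [haeD, haelow₂] with δ hδ hl
        rw [Real.norm_eq_abs, abs_of_nonneg (by positivity), ← div_eq_mul_inv]
        refine div_le_div₀ hd₂.le ?_ hz hl
        rw [abs_of_nonneg (le_trans hd₁.le hδ.1)]; exact hδ.2
    have hs1 : ∫ δ : ℝ, (|δ| / ‖z - (δ:ℂ)*(c:ℂ)*m₁‖)^2 ∂D = A₁ := by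
      rw [hA₁]
      refine integral_congr_ae (ae_of_all _ fun δ => ?_)
      show (|δ| / ‖z - (δ:ℂ)*(c:ℂ)*m₁‖)^2 = δ^2 / Complex.normSq (z - (δ:ℂ)*(c:ℂ)*m₁)
      rw [div_pow, sq_abs, ← Complex.sq_norm]
    have hs2 : ∫ δ : ℝ, (|δ| / ‖z - (δ:ℂ)*(c:ℂ)*m₂‖)^2 ∂D = A₂ := by
      rw [hA₂]
      refine integral_congr_ae (ae_of_all _ fun δ => ?_)
      show (|δ| / ‖z - (δ:ℂ)*(c:ℂ)*m₂‖)^2 = δ^2 / Complex.normSq (z - (δ:ℂ)*(c:ℂ)*m₂)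
      rw [div_pow, sq_abs, ← Complex.sq_norm]
    rw [hs1, hs2] at hcs
    exact le_trans hstep1 hcs
  -- conclude
  have hr : ‖(c:ℂ) * Q * P‖ < 1 := by
    have h1 : ‖(c:ℂ) * Q * P‖ = c * ‖Q‖ * ‖P‖ := by
      rw [norm_mul, norm_mul, Complex.norm_real, Real.norm_eq_abs, abs_of_pos hc]
    have h2 : c * ‖Q‖ * ‖P‖ ≤ c * (Real.sqrt B₁ * Real.sqrt B₂) * (Real.sqrt A₁ * Real.sqrt A₂) := by
      have := mul_le_mul hQbound hPbound (norm_nonneg P)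
        (mul_nonneg (Real.sqrt_nonneg _) (Real.sqrt_nonneg _))
      nlinarith [norm_nonneg Q, norm_nonneg P, hc.le]
    have hsq : (c * (Real.sqrt B₁ * Real.sqrt B₂) * (Real.sqrt A₁ * Real.sqrt A₂))^2
        = (c * (A₁ * B₁)) * (c * (A₂ * B₂)) := by
      rw [mul_pow, mul_pow, mul_pow, mul_pow, Real.sq_sqrt hB₁nn, Real.sq_sqrt hB₂nn,
        Real.sq_sqrt hA₁nn, Real.sq_sqrt hA₂nn]
      ring
    have hprod : (c * (A₁ * B₁)) * (c * (A₂ * B₂)) < 1 := by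
      have n1 : 0 ≤ c * (A₁ * B₁) := by positivity
      have n2 : 0 ≤ c * (A₂ * B₂) := by positivity
      nlinarith [hK₁, hK₂]
    have hnn : (0:ℝ) ≤ c * (Real.sqrt B₁ * Real.sqrt B₂) * (Real.sqrt A₁ * Real.sqrt A₂) := by
      positivity
    have hs1 : c * (Real.sqrt B₁ * Real.sqrt B₂) * (Real.sqrt A₁ * Real.sqrt A₂) < 1 := by
      nlinarith [hnn, hsq, hprod]
    calc ‖(c:ℂ) * Q * P‖ = c * ‖Q‖ * ‖P‖ := h1
      _ ≤ c * (Real.sqrt B₁ * Real.sqrt B₂) * (Real.sqrt A₁ * Real.sqrt A₂) := h2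
      _ < 1 := hs1
  have hnorm : ‖X₁ - X₂‖ = ‖X₁ - X₂‖ * ‖(c:ℂ) * Q * P‖ := by
    conv_lhs => rw [hDelta]
    rw [norm_mul]
  have hzero : ‖X₁ - X₂‖ = 0 := by
    nlinarith [norm_nonneg (X₁ - X₂), hnorm, hr]
  have := norm_eq_zero.mp hzero
  exact sub_eq_zero.mp this
end

section
/- Let H, D, c, z be as in the fundamental equation setup (H supported in [h₁,h₂] ⊂ (0,∞), D supported in [d₁,d₂] ⊂ (0,∞), c > 0, Im(z) > 0). Then the equation X = -∫ δ/(z - δc∫ τ/(τX+1) dH(τ)) dD(δ) has no real solution X. -/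
open MeasureTheory

/-- The fundamental equation admits no real solution. -/
theorem stmt9 (h₁ h₂ d₁ d₂ : ℝ) (hh₁ : 0 < h₁) (h12 : h₁ ≤ h₂)
    (hd₁ : 0 < d₁) (hd12 : d₁ ≤ d₂) (c : ℝ) (hc : 0 < c)
    (H : Measure ℝ) [IsProbabilityMeasure H] (hHsupp : H (Set.Icc h₁ h₂)ᶜ = 0)
    (D : Measure ℝ) [IsProbabilityMeasure D] (hDsupp : D (Set.Icc d₁ d₂)ᶜ = 0)
    (z : ℂ) (hz : 0 < z.im) :
    ∀ X : ℝ, (X : ℂ) ≠ -∫ δ : ℝ, (δ : ℂ) /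
        (z - (δ : ℂ) * (c : ℂ) * ∫ τ : ℝ, (τ : ℂ) / ((τ : ℂ) * (X : ℂ) + 1) ∂H) ∂D := by
  intro X hX
  -- the inner integral is real
  obtain ⟨r, hr⟩ : ∃ r : ℝ,
      (∫ τ : ℝ, (τ : ℂ) / ((τ : ℂ) * (X : ℂ) + 1) ∂H) = (r : ℂ) := by
    refine ⟨∫ τ : ℝ, τ / (τ * X + 1) ∂H, ?_⟩
    have h0 : (fun τ : ℝ => (τ : ℂ) / ((τ : ℂ) * (X : ℂ) + 1))
        = fun τ : ℝ => ((τ / (τ * X + 1) : ℝ) : ℂ) := by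
      funext τ; push_cast; ring
    rw [h0]
    exact Complex.ofRealLI.integral_comp_comm _
  rw [hr] at hX
  set f : ℝ → ℂ := fun δ => (δ : ℂ) / (z - (δ : ℂ) * (c : ℂ) * (r : ℂ)) with hf
  have hden_im : ∀ δ : ℝ, (z - (δ : ℂ) * (c : ℂ) * (r : ℂ)).im = z.im := by
    intro δ; simp
  have hden_ne : ∀ δ : ℝ, z - (δ : ℂ) * (c : ℂ) * (r : ℂ) ≠ 0 := by
    intro δ h
    have h2 := hden_im δ
    rw [h] at h2
    simp at h2
    exact hz.ne' h2.symm
  have hcont : Continuous f := by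
    apply Complex.continuous_ofReal.div
    · exact continuous_const.sub ((Complex.continuous_ofReal.mul continuous_const).mul
        continuous_const)
    · exact hden_ne
  have hae : ∀ᵐ δ ∂D, δ ∈ Set.Icc d₁ d₂ := by
    rw [MeasureTheory.ae_iff]
    exact hDsupp
  have hbound : ∀ᵐ δ ∂D, ‖f δ‖ ≤ d₂ / z.im := by
    filter_upwards [hae] with δ hδ
    have h1 : ‖(δ : ℂ)‖ ≤ d₂ := by
      simp only [Complex.norm_real, Real.norm_eq_abs]
      rw [abs_of_pos (lt_of_lt_of_le hd₁ hδ.1)]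
      exact hδ.2
    have h2 : z.im ≤ ‖z - (δ : ℂ) * (c : ℂ) * (r : ℂ)‖ := by
      calc z.im = |(z - (δ : ℂ) * (c : ℂ) * (r : ℂ)).im| := by
            rw [hden_im δ, abs_of_pos hz]
        _ ≤ ‖z - (δ : ℂ) * (c : ℂ) * (r : ℂ)‖ := Complex.abs_im_le_norm _
    rw [hf]
    simp only [norm_div]
    exact div_le_div₀ (le_of_lt (lt_of_lt_of_le hd₁ hd12)) h1 hz h2
  have hint : Integrable f D := by
    refine Integrable.mono' (integrable_const (d₂ / z.im)) hcont.aestronglyMeasurable ?_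
    exact hbound
  -- the imaginary part of f is negative on the support
  set g : ℝ → ℝ := fun δ => -(f δ).im with hg
  have hgval : ∀ δ : ℝ, g δ = δ * z.im / Complex.normSq (z - (δ : ℂ) * (c : ℂ) * (r : ℂ)) := by
    intro δ
    rw [hg, hf]
    simp only [Complex.div_im, Complex.ofReal_im, Complex.ofReal_re]
    rw [hden_im δ]
    ring
  have hgint : Integrable g D := hint.im.neg
  have hgnonneg : 0 ≤ᵐ[D] g := by
    filter_upwards [hae] with δ hδ
    rw [hgval δ]
    have h0 : 0 < δ := lt_of_lt_of_le hd₁ hδ.1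
    exact div_nonneg (by positivity) (Complex.normSq_nonneg _)
  have hgpos : ∀ δ ∈ Set.Icc d₁ d₂, 0 < g δ := by
    intro δ hδ
    rw [hgval δ]
    have h0 : 0 < δ := lt_of_lt_of_le hd₁ hδ.1
    have hns : 0 < Complex.normSq (z - (δ : ℂ) * (c : ℂ) * (r : ℂ)) :=
      Complex.normSq_pos.2 (hden_ne δ)
    positivity
  have hsupp : 0 < D (Function.support g) := by
    have hsub : Set.Icc d₁ d₂ ⊆ Function.support g := fun δ hδ => (hgpos δ hδ).ne'
    have h1 : D (Set.Icc d₁ d₂) = 1 := by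
      have := measure_add_measure_compl (μ := D) (measurableSet_Icc (a := d₁) (b := d₂))
      rw [hDsupp, add_zero] at this
      simpa using this
    calc (0 : ENNReal) < 1 := by norm_num
      _ = D (Set.Icc d₁ d₂) := h1.symm
      _ ≤ D (Function.support g) := measure_mono hsub
  have hintpos : 0 < ∫ δ, g δ ∂D :=
    (integral_pos_iff_support_of_nonneg_ae hgnonneg hgint).2 hsupp
  -- take imaginary parts in the equation
  have him : (0 : ℝ) = -(∫ δ, f δ ∂D).im := by
    have := congrArg Complex.im hX
    simpa using this
  have him2 : ∫ δ, (f δ).im ∂D = (∫ δ, f δ ∂D).im := integral_im hint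
  rw [← him2] at him
  rw [← integral_neg] at him
  exact absurd him.symm (ne_of_gt hintpos)
end

section
/- Let Σ be an n×n Hermitian positive semidefinite matrix and U an n×n unitary matrix with columns u₁,…,uₙ. Among all matrices of the form U D U* with D = Diag(d₁,…,dₙ) real diagonal, the Frobenius norm ‖U D U* - Σ‖ is minimized uniquely by d_i = u_i* Σ u_i for each i. -/
open Matrix ComplexOrder

/-- Oracle rotation-invariant covariance estimator: among rotation-invariant estimators
U D U* with D real diagonal, the Frobenius loss ‖UDU* - S‖² = Re Tr((UDU*-S)(UDU*-S)*)
is minimized uniquely by dᵢ = uᵢ* S uᵢ = (U* S U)ᵢᵢ. -/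
theorem stmt16 (n : ℕ) (S U : Matrix (Fin n) (Fin n) ℂ)
    (hS : S.IsHermitian) (hpsd : S.PosSemidef)
    (hU : U ∈ Matrix.unitaryGroup (Fin n) ℂ)
    (dstar : Fin n → ℂ) (hdstar : ∀ i, dstar i = (Uᴴ * S * U) i i) :
    ∀ d : Fin n → ℝ,
      (Matrix.trace ((U * Matrix.diagonal dstar * Uᴴ - S) *
          (U * Matrix.diagonal dstar * Uᴴ - S)ᴴ)).re
        ≤ (Matrix.trace ((U * Matrix.diagonal (fun i => (d i : ℂ)) * Uᴴ - S) *
          (U * Matrix.diagonal (fun i => (d i : ℂ)) * Uᴴ - S)ᴴ)).re ∧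
      ((Matrix.trace ((U * Matrix.diagonal (fun i => (d i : ℂ)) * Uᴴ - S) *
          (U * Matrix.diagonal (fun i => (d i : ℂ)) * Uᴴ - S)ᴴ)).re
        = (Matrix.trace ((U * Matrix.diagonal dstar * Uᴴ - S) *
          (U * Matrix.diagonal dstar * Uᴴ - S)ᴴ)).re
        → ∀ i, (d i : ℂ) = dstar i) := by
  intro d
  set M : Matrix (Fin n) (Fin n) ℂ := Uᴴ * S * U with hM
  have hUU : U * Uᴴ = 1 := Matrix.mem_unitaryGroup_iff.mp hU
  have hUU' : Uᴴ * U = 1 := by exact (Matrix.mem_unitaryGroup_iff'.mp hU)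
  -- key formula for the loss
  have key : ∀ c : Fin n → ℂ,
      (Matrix.trace ((U * Matrix.diagonal c * Uᴴ - S) *
        (U * Matrix.diagonal c * Uᴴ - S)ᴴ)).re
      = ∑ i, ∑ j, Complex.normSq ((Matrix.diagonal c - M) i j) := by
    intro c
    set A : Matrix (Fin n) (Fin n) ℂ := Matrix.diagonal c - M with hA
    have h1 : U * Matrix.diagonal c * Uᴴ - S = U * A * Uᴴ := by
      rw [hA, Matrix.mul_sub, Matrix.sub_mul]
      congr 1
      symm
      calc U * M * Uᴴ = (U * Uᴴ) * S * (U * Uᴴ) := by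
            rw [hM]; noncomm_ring
        _ = S := by rw [hUU, Matrix.one_mul, Matrix.mul_one]
    rw [h1]
    have h2 : (U * A * Uᴴ) * (U * A * Uᴴ)ᴴ = U * (A * Aᴴ) * Uᴴ := by
      rw [Matrix.conjTranspose_mul, Matrix.conjTranspose_mul,
        Matrix.conjTranspose_conjTranspose]
      calc U * A * Uᴴ * (U * (Aᴴ * Uᴴ))
          = U * A * (Uᴴ * U) * Aᴴ * Uᴴ := by noncomm_ring
        _ = U * (A * Aᴴ) * Uᴴ := by rw [hUU']; noncomm_ring
    rw [h2]
    have h3 : Matrix.trace (U * (A * Aᴴ) * Uᴴ) = Matrix.trace (A * Aᴴ) := by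
      rw [Matrix.trace_mul_comm, ← Matrix.mul_assoc, hUU', Matrix.one_mul]
    rw [h3]
    have h4 : Matrix.trace (A * Aᴴ)
        = ∑ i, ∑ j, (Complex.normSq (A i j) : ℂ) := by
      simp only [Matrix.trace, Matrix.diag, Matrix.mul_apply,
        Matrix.conjTranspose_apply]
      congr 1; ext i; congr 1; ext j
      exact Complex.mul_conj (A i j)
    rw [h4]
    simp [Complex.re_sum]
  have hd := key (fun i => (d i : ℂ))
  have hds := key dstar
  -- entrywise comparison
  have entry : ∀ i j, Complex.normSq ((Matrix.diagonal (fun i => (d i : ℂ)) - M) i j)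
      = Complex.normSq ((Matrix.diagonal dstar - M) i j)
        + (if i = j then Complex.normSq ((d i : ℂ) - M i i) else 0) := by
    intro i j
    by_cases h : i = j
    · subst h
      simp [Matrix.diagonal_apply_eq, hdstar i, ← hM]
    · simp [Matrix.diagonal_apply_ne _ h, h]
  have sum_eq : (∑ i, ∑ j, Complex.normSq ((Matrix.diagonal (fun i => (d i : ℂ)) - M) i j))
      = (∑ i, ∑ j, Complex.normSq ((Matrix.diagonal dstar - M) i j))
        + ∑ i, Complex.normSq ((d i : ℂ) - M i i) := by
    have h5 : ∀ i, ∑ j, (Complex.normSq ((Matrix.diagonal dstar - M) i j)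
        + if i = j then Complex.normSq ((d i : ℂ) - M i i) else 0)
        = (∑ j, Complex.normSq ((Matrix.diagonal dstar - M) i j))
          + Complex.normSq ((d i : ℂ) - M i i) := by
      intro i
      rw [Finset.sum_add_distrib]
      congr 1
      simp
    simp only [entry, h5]
    rw [Finset.sum_add_distrib]
  have hnn : 0 ≤ ∑ i, Complex.normSq ((d i : ℂ) - M i i) :=
    Finset.sum_nonneg fun i _ => Complex.normSq_nonneg _
  constructor
  · rw [hd, hds, sum_eq]; linarith
  · intro heq i
    rw [hd, hds, sum_eq] at heq
    have hz : ∑ i, Complex.normSq ((d i : ℂ) - M i i) = 0 := by linarith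
    have : Complex.normSq ((d i : ℂ) - M i i) = 0 :=
      (Finset.sum_eq_zero_iff_of_nonneg
        (fun i _ => Complex.normSq_nonneg _)).mp hz i (Finset.mem_univ i)
    have : (d i : ℂ) - M i i = 0 := by
      exact Complex.normSq_eq_zero.mp this
    rw [hdstar i]
    linear_combination this
end
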